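/- For every k ∈ {2, 4, 6, 14}, the graph Σ is k-equivalent to the complete bipartite graph K_{2,3}: 𝔞_k^{Σ} = 𝔞_k^{K_{2,3}}, where Σ is the graph on {1,2,3,4,5} with edges {1,2},{2,3},{3,4},{2,5}, and K_{2,3} is Σ with the two additional edges {1,4} and {4,5} (the complete bipartite graph with parts {2,4} and {1,3,5}). -/

import Mathlib

open Matrix DirectSum

attribute [local instance 100] LieRing.ofAssociativeRing

noncomputable section

/-- The identity Pauli matrix `I`. -/
def PauliI : Matrix (Fin 2) (Fin 2) ℂ := 1

/-- The Pauli matrix `X`. -/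
def PauliX : Matrix (Fin 2) (Fin 2) ℂ := !![0, 1; 1, 0]

/-- The Pauli matrix `Y`. -/
def PauliY : Matrix (Fin 2) (Fin 2) ℂ := !![0, -Complex.I; Complex.I, 0]

/-- The Pauli matrix `Z`. -/
def PauliZ : Matrix (Fin 2) (Fin 2) ℂ := !![1, 0; 0, -1]

/-- The `n`-fold Kronecker product of the 2×2 matrices `A 0, …, A (n-1)`, realized as a
matrix indexed by `Fin n → Fin 2` (a type of cardinality `2^n`). -/
def pauliString {n : ℕ} (A : Fin n → Matrix (Fin 2) (Fin 2) ℂ) :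
    Matrix (Fin n → Fin 2) (Fin n → Fin 2) ℂ :=
  Matrix.of fun x y => ∏ k, A k (x k) (y k)

/-- The Pauli string `A_i B_j` with `A` at site `i`, `B` at site `j`, and identity elsewhere. -/
def twoLocal {n : ℕ} (A B : Matrix (Fin 2) (Fin 2) ℂ) (i j : Fin n) :
    Matrix (Fin n → Fin 2) (Fin n → Fin 2) ℂ :=
  pauliString (fun k => if k = i then A else if k = j then B else PauliI)

/-- The Pauli string `A_i` with `A` at site `i` and identity elsewhere. -/
def oneLocal {n : ℕ} (A : Matrix (Fin 2) (Fin 2) ℂ) (i : Fin n) :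
    Matrix (Fin n → Fin 2) (Fin n → Fin 2) ℂ :=
  pauliString (fun k => if k = i then A else PauliI)

/-- The generating sets `𝒜_k` (a pair `(a, b)` stands for `a ⊗ b`). -/
def genSet : ℕ → Set (Matrix (Fin 2) (Fin 2) ℂ × Matrix (Fin 2) (Fin 2) ℂ)
  | 2 => {(PauliX, PauliY), (PauliY, PauliX)}
  | 4 => {(PauliX, PauliX), (PauliY, PauliY)}
  | 6 => {(PauliX, PauliX), (PauliY, PauliZ), (PauliZ, PauliY)}
  | 7 => {(PauliX, PauliX), (PauliY, PauliY), (PauliZ, PauliZ)}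
  | 14 => {(PauliX, PauliX), (PauliY, PauliY), (PauliX, PauliY), (PauliY, PauliX)}
  | 16 => {(PauliX, PauliY), (PauliY, PauliX), (PauliY, PauliZ), (PauliZ, PauliY)}
  | 20 => {(PauliX, PauliX), (PauliY, PauliY), (PauliY, PauliZ), (PauliZ, PauliY)}
  | 22 => {(PauliX, PauliX), (PauliX, PauliY), (PauliY, PauliX), (PauliX, PauliZ), (PauliZ, PauliX)}
  | _ => ∅

/-- The dynamical Lie algebra `𝔞_k^G`: the smallest real Lie subalgebra of the `2^n × 2^n`
complex matrices containing `i·(a_i · b_j)` for every edge `{i, j}` of `G` and every pair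
`(a, b)` with `a ⊗ b ∈ 𝒜_k`. -/
def dla (k : ℕ) {n : ℕ} (G : SimpleGraph (Fin n)) :
    LieSubalgebra ℝ (Matrix (Fin n → Fin 2) (Fin n → Fin 2) ℂ) :=
  LieSubalgebra.lieSpan ℝ _
    {M | ∃ i j : Fin n, G.Adj i j ∧ ∃ p ∈ genSet k, M = Complex.I • twoLocal p.1 p.2 i j}

/-- The graph `Σ` on `{1, …, 5}` (realized as `Fin 5`, vertex `v` being index `v - 1`)
with edges `{1,2}, {2,3}, {3,4}, {2,5}`. -/
def sigmaGraph : SimpleGraph (Fin 5) :=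
  SimpleGraph.fromRel (fun i j =>
    (i, j) ∈ ({(0, 1), (1, 2), (2, 3), (1, 4)} : Set (Fin 5 × Fin 5)))

/-- The complete bipartite graph `K_{2,3}` with parts `{2, 4}` and `{1, 3, 5}`: the graph `Σ`
together with the two additional edges `{1, 4}` and `{4, 5}`. -/
def K23Graph : SimpleGraph (Fin 5) :=
  SimpleGraph.fromRel (fun i j =>
    (i, j) ∈ ({(0, 1), (1, 2), (2, 3), (1, 4), (0, 3), (3, 4)} : Set (Fin 5 × Fin 5)))


def σm : Fin 4 → Matrix (Fin 2) (Fin 2) ℂ := ![1, PauliX, PauliY, PauliZ]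
def pmul : Fin 4 → Fin 4 → Fin 4 := ![![0,1,2,3],![1,0,3,2],![2,3,0,1],![3,2,1,0]]
def pexp : Fin 4 → Fin 4 → ℕ := ![![0,0,0,0],![0,0,1,3],![0,3,0,1],![0,1,3,0]]

lemma pmul_comm : ∀ a b, pmul a b = pmul b a := by decide

lemma σm_mul : ∀ a b, σm a * σm b = (Complex.I ^ pexp a b) • σm (pmul a b) := by
  intro a b
  fin_cases a <;> fin_cases b <;>
    · ext i j
      fin_cases i <;> fin_cases j <;>
        norm_num [σm, pmul, pexp, PauliX, PauliY, PauliZ, Matrix.mul_apply, Fin.sum_univ_two,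
          Matrix.one_apply, Complex.ext_iff, Matrix.vecHead, Matrix.vecTail, pow_succ, Matrix.cons_val_two, Matrix.cons_val_three]

lemma pauliString_mul {n : ℕ} (A B : Fin n → Matrix (Fin 2) (Fin 2) ℂ) :
    pauliString A * pauliString B = pauliString (fun k => A k * B k) := by
  ext x y
  simp only [pauliString, Matrix.mul_apply, Matrix.of_apply]
  rw [Finset.prod_univ_sum, Fintype.piFinset_univ]
  exact Finset.sum_congr rfl fun z _ => (Finset.prod_mul_distrib).symm

lemma pauliString_const_smul {n : ℕ} (c : Fin n → ℂ) (A : Fin n → Matrix (Fin 2) (Fin 2) ℂ) :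
    pauliString (fun k => c k • A k) = (∏ k, c k) • pauliString A := by
  ext x y
  simp [pauliString, Finset.prod_mul_distrib]

lemma Ipow_mod (n : ℕ) : Complex.I ^ n = Complex.I ^ (n % 4) := by
  conv_lhs => rw [← Nat.div_add_mod n 4]
  rw [pow_add, pow_mul]
  norm_num

abbrev Mat5 := Matrix (Fin 5 → Fin 2) (Fin 5 → Fin 2) ℂ

lemma step {S : LieSubalgebra ℝ Mat5}
    (f g h : Fin 5 → Fin 4) (r : ℝ) (e1 e2 : ℕ)
    (hf : Complex.I • pauliString (fun k => σm (f k)) ∈ S)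
    (hg : Complex.I • pauliString (fun k => σm (g k)) ∈ S)
    (hfg : ∀ k, pmul (f k) (g k) = h k)
    (h1 : (∑ k, pexp (f k) (g k)) % 4 = e1)
    (h2 : (∑ k, pexp (g k) (f k)) % 4 = e2)
    (hr : Complex.I ^ e2 - Complex.I ^ e1 = (r : ℂ) * Complex.I) (hr0 : r ≠ 0) :
    Complex.I • pauliString (fun k => σm (h k)) ∈ S := by
  have E1 : (fun k => σm (f k) * σm (g k))
      = fun k => (Complex.I ^ pexp (f k) (g k)) • σm (h k) := by
    funext k; rw [σm_mul, hfg k]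
  have E2 : (fun k => σm (g k) * σm (f k))
      = fun k => (Complex.I ^ pexp (g k) (f k)) • σm (h k) := by
    funext k; rw [σm_mul, pmul_comm, hfg k]
  have key : ⁅(Complex.I • pauliString fun k => σm (f k)),
      (Complex.I • pauliString fun k => σm (g k))⁆
      = ((r : ℂ) * Complex.I) • pauliString (fun k => σm (h k)) := by
    rw [Ring.lie_def, smul_mul_smul_comm, smul_mul_smul_comm, pauliString_mul, pauliString_mul]
    rw [E1, E2, pauliString_const_smul, pauliString_const_smul, smul_smul, smul_smul, ← sub_smul]
    congr 1
    rw [Finset.prod_pow_eq_pow_sum, Finset.prod_pow_eq_pow_sum, Ipow_mod (∑ k, pexp (f k) (g k)),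
      Ipow_mod (∑ k, pexp (g k) (f k)), h1, h2, Complex.I_mul_I]
    linear_combination hr
  have hb := S.lie_mem hf hg
  rw [key] at hb
  have h3 := S.smul_mem r⁻¹ hb
  have hr0' : (r : ℂ) ≠ 0 := by exact_mod_cast hr0
  have hs : (r⁻¹ : ℝ) • ((r : ℂ) * Complex.I) = Complex.I := by
    rw [Complex.real_smul, Complex.ofReal_inv, ← mul_assoc, inv_mul_cancel₀ hr0', one_mul]
  rwa [← smul_assoc, hs] at h3

lemma gen_mem {K : ℕ} (i j : Fin 5) (hij : sigmaGraph.Adj i j)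
    (p : Matrix (Fin 2) (Fin 2) ℂ × Matrix (Fin 2) (Fin 2) ℂ) (hp : p ∈ genSet K)
    (f : Fin 5 → Fin 4) (hf : twoLocal p.1 p.2 i j = pauliString fun k => σm (f k)) :
    Complex.I • pauliString (fun k => σm (f k)) ∈ dla K sigmaGraph := by
  rw [← hf]
  exact LieSubalgebra.subset_lieSpan ⟨i, j, hij, p, hp, rfl⟩

lemma adj_mono : ∀ i j : Fin 5, sigmaGraph.Adj i j → K23Graph.Adj i j := by
  simp only [sigmaGraph, K23Graph, SimpleGraph.fromRel_adj, Set.mem_insert_iff,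
    Set.mem_singleton_iff, Prod.mk.injEq]
  decide

lemma adj_cases : ∀ i j : Fin 5, K23Graph.Adj i j → sigmaGraph.Adj i j ∨
    (i = 0 ∧ j = 3) ∨ (i = 3 ∧ j = 0) ∨ (i = 3 ∧ j = 4) ∨ (i = 4 ∧ j = 3) := by
  simp only [sigmaGraph, K23Graph, SimpleGraph.fromRel_adj, Set.mem_insert_iff,
    Set.mem_singleton_iff, Prod.mk.injEq]
  decide

lemma hrA : Complex.I ^ (3:ℕ) - Complex.I ^ (1:ℕ) = ((-2 : ℝ) : ℂ) * Complex.I := by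
  have h3 : Complex.I ^ (3:ℕ) = -Complex.I := by
    simp [pow_succ, Complex.I_mul_I]
  rw [h3]; push_cast; ring

lemma hrB : Complex.I ^ (1:ℕ) - Complex.I ^ (3:ℕ) = ((2 : ℝ) : ℂ) * Complex.I := by
  have h3 : Complex.I ^ (3:ℕ) = -Complex.I := by
    simp [pow_succ, Complex.I_mul_I]
  rw [h3]; push_cast; ring

lemma stepA {S : LieSubalgebra ℝ Mat5} (f g h : Fin 5 → Fin 4)
    (hf : Complex.I • pauliString (fun k => σm (f k)) ∈ S)
    (hg : Complex.I • pauliString (fun k => σm (g k)) ∈ S)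
    (hfg : ∀ k, pmul (f k) (g k) = h k)
    (h1 : (∑ k, pexp (f k) (g k)) % 4 = 1)
    (h2 : (∑ k, pexp (g k) (f k)) % 4 = 3) :
    Complex.I • pauliString (fun k => σm (h k)) ∈ S :=
  step f g h (-2) 1 3 hf hg hfg h1 h2 hrA (by norm_num)

lemma stepB {S : LieSubalgebra ℝ Mat5} (f g h : Fin 5 → Fin 4)
    (hf : Complex.I • pauliString (fun k => σm (f k)) ∈ S)
    (hg : Complex.I • pauliString (fun k => σm (g k)) ∈ S)
    (hfg : ∀ k, pmul (f k) (g k) = h k)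
    (h1 : (∑ k, pexp (f k) (g k)) % 4 = 3)
    (h2 : (∑ k, pexp (g k) (f k)) % 4 = 1) :
    Complex.I • pauliString (fun k => σm (h k)) ∈ S :=
  step f g h 2 3 1 hf hg hfg h1 h2 hrB (by norm_num)


lemma adjE01 : sigmaGraph.Adj 0 1 := by simp [sigmaGraph, SimpleGraph.fromRel_adj]
lemma adjE12 : sigmaGraph.Adj 1 2 := by simp [sigmaGraph, SimpleGraph.fromRel_adj]
lemma adjE23 : sigmaGraph.Adj 2 3 := by simp [sigmaGraph, SimpleGraph.fromRel_adj]
lemma adjE14 : sigmaGraph.Adj 1 4 := by simp [sigmaGraph, SimpleGraph.fromRel_adj]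
lemma adjE10 : sigmaGraph.Adj 1 0 := by simp [sigmaGraph, SimpleGraph.fromRel_adj]
lemma adjE21 : sigmaGraph.Adj 2 1 := by simp [sigmaGraph, SimpleGraph.fromRel_adj]
lemma adjE32 : sigmaGraph.Adj 3 2 := by simp [sigmaGraph, SimpleGraph.fromRel_adj]
lemma adjE41 : sigmaGraph.Adj 4 1 := by simp [sigmaGraph, SimpleGraph.fromRel_adj]

lemma key2 : dla 2 K23Graph ≤ dla 2 sigmaGraph := by
  have m0 : Complex.I • pauliString (fun k => σm (![0,2,0,0,1] k)) ∈ dla 2 sigmaGraph :=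
    gen_mem 1 4 adjE14 (PauliY, PauliX) (by simp [genSet]) _ rfl
  have m1 : Complex.I • pauliString (fun k => σm (![2,1,0,0,0] k)) ∈ dla 2 sigmaGraph :=
    gen_mem 0 1 adjE01 (PauliY, PauliX) (by simp [genSet]) _ rfl
  have m2 : Complex.I • pauliString (fun k => σm (![2,3,0,0,1] k)) ∈ dla 2 sigmaGraph :=
    stepB ![0,2,0,0,1] ![2,1,0,0,0] ![2,3,0,0,1] m0 m1 (by decide) (by decide) (by decide)
  have m3 : Complex.I • pauliString (fun k => σm (![0,2,1,0,0] k)) ∈ dla 2 sigmaGraph :=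
    gen_mem 1 2 adjE12 (PauliY, PauliX) (by simp [genSet]) _ rfl
  have m4 : Complex.I • pauliString (fun k => σm (![2,1,1,0,1] k)) ∈ dla 2 sigmaGraph :=
    stepA ![0,2,1,0,0] ![2,3,0,0,1] ![2,1,1,0,1] m3 m2 (by decide) (by decide) (by decide)
  have m5 : Complex.I • pauliString (fun k => σm (![0,1,2,0,0] k)) ∈ dla 2 sigmaGraph :=
    gen_mem 1 2 adjE12 (PauliX, PauliY) (by simp [genSet]) _ rfl
  have m6 : Complex.I • pauliString (fun k => σm (![0,3,2,0,1] k)) ∈ dla 2 sigmaGraph :=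
    stepB ![0,2,0,0,1] ![0,1,2,0,0] ![0,3,2,0,1] m0 m5 (by decide) (by decide) (by decide)
  have m7 : Complex.I • pauliString (fun k => σm (![0,0,2,1,0] k)) ∈ dla 2 sigmaGraph :=
    gen_mem 2 3 adjE23 (PauliY, PauliX) (by simp [genSet]) _ rfl
  have m8 : Complex.I • pauliString (fun k => σm (![0,2,3,1,0] k)) ∈ dla 2 sigmaGraph :=
    stepB ![0,0,2,1,0] ![0,2,1,0,0] ![0,2,3,1,0] m7 m3 (by decide) (by decide) (by decide)
  have m9 : Complex.I • pauliString (fun k => σm (![2,3,3,1,0] k)) ∈ dla 2 sigmaGraph :=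
    stepA ![2,1,0,0,0] ![0,2,3,1,0] ![2,3,3,1,0] m1 m8 (by decide) (by decide) (by decide)
  have m10 : Complex.I • pauliString (fun k => σm (![0,1,0,0,2] k)) ∈ dla 2 sigmaGraph :=
    gen_mem 1 4 adjE14 (PauliX, PauliY) (by simp [genSet]) _ rfl
  have m11 : Complex.I • pauliString (fun k => σm (![2,2,3,1,2] k)) ∈ dla 2 sigmaGraph :=
    stepB ![0,1,0,0,2] ![2,3,3,1,0] ![2,2,3,1,2] m10 m9 (by decide) (by decide) (by decide)
  have m12 : Complex.I • pauliString (fun k => σm (![2,1,1,1,3] k)) ∈ dla 2 sigmaGraph :=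
    stepA ![0,3,2,0,1] ![2,2,3,1,2] ![2,1,1,1,3] m6 m11 (by decide) (by decide) (by decide)
  have m13 : Complex.I • pauliString (fun k => σm (![0,0,0,1,2] k)) ∈ dla 2 sigmaGraph :=
    stepB ![2,1,1,0,1] ![2,1,1,1,3] ![0,0,0,1,2] m4 m12 (by decide) (by decide) (by decide)
  have m14 : Complex.I • pauliString (fun k => σm (![0,3,1,0,2] k)) ∈ dla 2 sigmaGraph :=
    stepB ![0,2,1,0,0] ![0,1,0,0,2] ![0,3,1,0,2] m3 m10 (by decide) (by decide) (by decide)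
  have m15 : Complex.I • pauliString (fun k => σm (![1,2,0,0,0] k)) ∈ dla 2 sigmaGraph :=
    gen_mem 0 1 adjE01 (PauliX, PauliY) (by simp [genSet]) _ rfl
  have m16 : Complex.I • pauliString (fun k => σm (![1,3,2,0,0] k)) ∈ dla 2 sigmaGraph :=
    stepA ![0,1,2,0,0] ![1,2,0,0,0] ![1,3,2,0,0] m5 m15 (by decide) (by decide) (by decide)
  have m17 : Complex.I • pauliString (fun k => σm (![0,0,1,2,0] k)) ∈ dla 2 sigmaGraph :=
    gen_mem 2 3 adjE23 (PauliX, PauliY) (by simp [genSet]) _ rfl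
  have m18 : Complex.I • pauliString (fun k => σm (![0,1,3,2,0] k)) ∈ dla 2 sigmaGraph :=
    stepA ![0,0,1,2,0] ![0,1,2,0,0] ![0,1,3,2,0] m17 m5 (by decide) (by decide) (by decide)
  have m19 : Complex.I • pauliString (fun k => σm (![0,3,3,2,1] k)) ∈ dla 2 sigmaGraph :=
    stepB ![0,2,0,0,1] ![0,1,3,2,0] ![0,3,3,2,1] m0 m18 (by decide) (by decide) (by decide)
  have m20 : Complex.I • pauliString (fun k => σm (![1,1,3,2,1] k)) ∈ dla 2 sigmaGraph :=
    stepA ![1,2,0,0,0] ![0,3,3,2,1] ![1,1,3,2,1] m15 m19 (by decide) (by decide) (by decide)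
  have m21 : Complex.I • pauliString (fun k => σm (![1,0,3,2,3] k)) ∈ dla 2 sigmaGraph :=
    stepB ![0,1,0,0,2] ![1,1,3,2,1] ![1,0,3,2,3] m10 m20 (by decide) (by decide) (by decide)
  have m22 : Complex.I • pauliString (fun k => σm (![0,3,1,2,3] k)) ∈ dla 2 sigmaGraph :=
    stepA ![1,3,2,0,0] ![1,0,3,2,3] ![0,3,1,2,3] m16 m21 (by decide) (by decide) (by decide)
  have m23 : Complex.I • pauliString (fun k => σm (![0,0,0,2,1] k)) ∈ dla 2 sigmaGraph :=
    stepA ![0,3,1,0,2] ![0,3,1,2,3] ![0,0,0,2,1] m14 m22 (by decide) (by decide) (by decide)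
  have m24 : Complex.I • pauliString (fun k => σm (![1,3,0,0,2] k)) ∈ dla 2 sigmaGraph :=
    stepB ![1,2,0,0,0] ![0,1,0,0,2] ![1,3,0,0,2] m15 m10 (by decide) (by decide) (by decide)
  have m25 : Complex.I • pauliString (fun k => σm (![1,1,1,0,2] k)) ∈ dla 2 sigmaGraph :=
    stepA ![1,2,0,0,0] ![0,3,1,0,2] ![1,1,1,0,2] m15 m14 (by decide) (by decide) (by decide)
  have m26 : Complex.I • pauliString (fun k => σm (![1,2,3,0,3] k)) ∈ dla 2 sigmaGraph :=
    stepA ![0,3,2,0,1] ![1,1,1,0,2] ![1,2,3,0,3] m6 m25 (by decide) (by decide) (by decide)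
  have m27 : Complex.I • pauliString (fun k => σm (![3,1,3,0,2] k)) ∈ dla 2 sigmaGraph :=
    stepA ![2,3,0,0,1] ![1,2,3,0,3] ![3,1,3,0,2] m2 m26 (by decide) (by decide) (by decide)
  have m28 : Complex.I • pauliString (fun k => σm (![3,3,0,1,2] k)) ∈ dla 2 sigmaGraph :=
    stepB ![0,2,3,1,0] ![3,1,3,0,2] ![3,3,0,1,2] m8 m27 (by decide) (by decide) (by decide)
  have m29 : Complex.I • pauliString (fun k => σm (![2,0,0,1,0] k)) ∈ dla 2 sigmaGraph :=
    stepB ![1,3,0,0,2] ![3,3,0,1,2] ![2,0,0,1,0] m24 m28 (by decide) (by decide) (by decide)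
  have m30 : Complex.I • pauliString (fun k => σm (![2,2,2,0,1] k)) ∈ dla 2 sigmaGraph :=
    stepB ![0,1,2,0,0] ![2,3,0,0,1] ![2,2,2,0,1] m5 m2 (by decide) (by decide) (by decide)
  have m31 : Complex.I • pauliString (fun k => σm (![2,0,3,0,1] k)) ∈ dla 2 sigmaGraph :=
    stepA ![0,2,1,0,0] ![2,2,2,0,1] ![2,0,3,0,1] m3 m30 (by decide) (by decide) (by decide)
  have m32 : Complex.I • pauliString (fun k => σm (![3,2,3,0,1] k)) ∈ dla 2 sigmaGraph :=
    stepA ![1,2,0,0,0] ![2,0,3,0,1] ![3,2,3,0,1] m15 m31 (by decide) (by decide) (by decide)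
  have m33 : Complex.I • pauliString (fun k => σm (![3,3,0,2,1] k)) ∈ dla 2 sigmaGraph :=
    stepA ![0,1,3,2,0] ![3,2,3,0,1] ![3,3,0,2,1] m18 m32 (by decide) (by decide) (by decide)
  have m34 : Complex.I • pauliString (fun k => σm (![1,0,0,2,0] k)) ∈ dla 2 sigmaGraph :=
    stepA ![2,3,0,0,1] ![3,3,0,2,1] ![1,0,0,2,0] m2 m33 (by decide) (by decide) (by decide)
  apply LieSubalgebra.lieSpan_le.mpr
  rintro M ⟨i, j, hij, p, hp, rfl⟩
  rcases adj_cases i j hij with h | ⟨rfl, rfl⟩ | ⟨rfl, rfl⟩ | ⟨rfl, rfl⟩ | ⟨rfl, rfl⟩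
  · exact LieSubalgebra.subset_lieSpan ⟨i, j, h, p, hp, rfl⟩
  · simp only [genSet, Set.mem_insert_iff, Set.mem_singleton_iff] at hp
    rcases hp with rfl | rfl
    · exact m34
    · exact m29
  · simp only [genSet, Set.mem_insert_iff, Set.mem_singleton_iff] at hp
    rcases hp with rfl | rfl
    · exact m29
    · exact m34
  · simp only [genSet, Set.mem_insert_iff, Set.mem_singleton_iff] at hp
    rcases hp with rfl | rfl
    · exact m13
    · exact m23
  · simp only [genSet, Set.mem_insert_iff, Set.mem_singleton_iff] at hp
    rcases hp with rfl | rfl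
    · exact m23
    · exact m13

lemma key4 : dla 4 K23Graph ≤ dla 4 sigmaGraph := by
  have m0 : Complex.I • pauliString (fun k => σm (![1,1,0,0,0] k)) ∈ dla 4 sigmaGraph :=
    gen_mem 0 1 adjE01 (PauliX, PauliX) (by simp [genSet]) _ rfl
  have m1 : Complex.I • pauliString (fun k => σm (![0,2,0,0,2] k)) ∈ dla 4 sigmaGraph :=
    gen_mem 1 4 adjE14 (PauliY, PauliY) (by simp [genSet]) _ rfl
  have m2 : Complex.I • pauliString (fun k => σm (![1,3,0,0,2] k)) ∈ dla 4 sigmaGraph :=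
    stepA ![1,1,0,0,0] ![0,2,0,0,2] ![1,3,0,0,2] m0 m1 (by decide) (by decide) (by decide)
  have m3 : Complex.I • pauliString (fun k => σm (![0,2,2,0,0] k)) ∈ dla 4 sigmaGraph :=
    gen_mem 1 2 adjE12 (PauliY, PauliY) (by simp [genSet]) _ rfl
  have m4 : Complex.I • pauliString (fun k => σm (![1,3,2,0,0] k)) ∈ dla 4 sigmaGraph :=
    stepA ![1,1,0,0,0] ![0,2,2,0,0] ![1,3,2,0,0] m0 m3 (by decide) (by decide) (by decide)
  have m5 : Complex.I • pauliString (fun k => σm (![0,1,0,0,1] k)) ∈ dla 4 sigmaGraph :=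
    gen_mem 1 4 adjE14 (PauliX, PauliX) (by simp [genSet]) _ rfl
  have m6 : Complex.I • pauliString (fun k => σm (![1,2,2,0,1] k)) ∈ dla 4 sigmaGraph :=
    stepB ![0,1,0,0,1] ![1,3,2,0,0] ![1,2,2,0,1] m5 m4 (by decide) (by decide) (by decide)
  have m7 : Complex.I • pauliString (fun k => σm (![0,0,1,1,0] k)) ∈ dla 4 sigmaGraph :=
    gen_mem 2 3 adjE23 (PauliX, PauliX) (by simp [genSet]) _ rfl
  have m8 : Complex.I • pauliString (fun k => σm (![1,2,3,1,1] k)) ∈ dla 4 sigmaGraph :=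
    stepA ![0,0,1,1,0] ![1,2,2,0,1] ![1,2,3,1,1] m7 m6 (by decide) (by decide) (by decide)
  have m9 : Complex.I • pauliString (fun k => σm (![1,0,1,1,1] k)) ∈ dla 4 sigmaGraph :=
    stepA ![0,2,2,0,0] ![1,2,3,1,1] ![1,0,1,1,1] m3 m8 (by decide) (by decide) (by decide)
  have m10 : Complex.I • pauliString (fun k => σm (![1,2,1,1,3] k)) ∈ dla 4 sigmaGraph :=
    stepB ![0,2,0,0,2] ![1,0,1,1,1] ![1,2,1,1,3] m1 m9 (by decide) (by decide) (by decide)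
  have m11 : Complex.I • pauliString (fun k => σm (![0,1,1,0,0] k)) ∈ dla 4 sigmaGraph :=
    gen_mem 1 2 adjE12 (PauliX, PauliX) (by simp [genSet]) _ rfl
  have m12 : Complex.I • pauliString (fun k => σm (![1,3,0,1,3] k)) ∈ dla 4 sigmaGraph :=
    stepA ![0,1,1,0,0] ![1,2,1,1,3] ![1,3,0,1,3] m11 m10 (by decide) (by decide) (by decide)
  have m13 : Complex.I • pauliString (fun k => σm (![0,0,0,1,1] k)) ∈ dla 4 sigmaGraph :=
    stepA ![1,3,0,0,2] ![1,3,0,1,3] ![0,0,0,1,1] m2 m12 (by decide) (by decide) (by decide)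
  have m14 : Complex.I • pauliString (fun k => σm (![1,1,2,0,2] k)) ∈ dla 4 sigmaGraph :=
    stepA ![0,2,2,0,0] ![1,3,0,0,2] ![1,1,2,0,2] m3 m2 (by decide) (by decide) (by decide)
  have m15 : Complex.I • pauliString (fun k => σm (![0,0,2,2,0] k)) ∈ dla 4 sigmaGraph :=
    gen_mem 2 3 adjE23 (PauliY, PauliY) (by simp [genSet]) _ rfl
  have m16 : Complex.I • pauliString (fun k => σm (![0,1,3,2,0] k)) ∈ dla 4 sigmaGraph :=
    stepB ![0,0,2,2,0] ![0,1,1,0,0] ![0,1,3,2,0] m15 m11 (by decide) (by decide) (by decide)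
  have m17 : Complex.I • pauliString (fun k => σm (![1,2,1,0,2] k)) ∈ dla 4 sigmaGraph :=
    stepB ![0,1,1,0,0] ![1,3,0,0,2] ![1,2,1,0,2] m11 m2 (by decide) (by decide) (by decide)
  have m18 : Complex.I • pauliString (fun k => σm (![2,2,0,0,0] k)) ∈ dla 4 sigmaGraph :=
    gen_mem 0 1 adjE01 (PauliY, PauliY) (by simp [genSet]) _ rfl
  have m19 : Complex.I • pauliString (fun k => σm (![3,0,1,0,2] k)) ∈ dla 4 sigmaGraph :=
    stepB ![2,2,0,0,0] ![1,2,1,0,2] ![3,0,1,0,2] m18 m17 (by decide) (by decide) (by decide)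
  have m20 : Complex.I • pauliString (fun k => σm (![3,1,2,2,2] k)) ∈ dla 4 sigmaGraph :=
    stepA ![0,1,3,2,0] ![3,0,1,0,2] ![3,1,2,2,2] m16 m19 (by decide) (by decide) (by decide)
  have m21 : Complex.I • pauliString (fun k => σm (![2,0,0,2,0] k)) ∈ dla 4 sigmaGraph :=
    stepB ![1,1,2,0,2] ![3,1,2,2,2] ![2,0,0,2,0] m14 m20 (by decide) (by decide) (by decide)
  have m22 : Complex.I • pauliString (fun k => σm (![2,3,0,0,1] k)) ∈ dla 4 sigmaGraph :=
    stepA ![0,1,0,0,1] ![2,2,0,0,0] ![2,3,0,0,1] m5 m18 (by decide) (by decide) (by decide)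
  have m23 : Complex.I • pauliString (fun k => σm (![2,1,2,0,1] k)) ∈ dla 4 sigmaGraph :=
    stepA ![0,2,2,0,0] ![2,3,0,0,1] ![2,1,2,0,1] m3 m22 (by decide) (by decide) (by decide)
  have m24 : Complex.I • pauliString (fun k => σm (![1,3,3,1,0] k)) ∈ dla 4 sigmaGraph :=
    stepA ![0,0,1,1,0] ![1,3,2,0,0] ![1,3,3,1,0] m7 m4 (by decide) (by decide) (by decide)
  have m25 : Complex.I • pauliString (fun k => σm (![2,2,1,0,1] k)) ∈ dla 4 sigmaGraph :=
    stepB ![0,1,1,0,0] ![2,3,0,0,1] ![2,2,1,0,1] m11 m22 (by decide) (by decide) (by decide)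
  have m26 : Complex.I • pauliString (fun k => σm (![3,1,2,1,1] k)) ∈ dla 4 sigmaGraph :=
    stepA ![1,3,3,1,0] ![2,2,1,0,1] ![3,1,2,1,1] m24 m25 (by decide) (by decide) (by decide)
  have m27 : Complex.I • pauliString (fun k => σm (![1,0,0,1,0] k)) ∈ dla 4 sigmaGraph :=
    stepA ![2,1,2,0,1] ![3,1,2,1,1] ![1,0,0,1,0] m23 m26 (by decide) (by decide) (by decide)
  have m28 : Complex.I • pauliString (fun k => σm (![0,3,1,0,2] k)) ∈ dla 4 sigmaGraph :=
    stepB ![0,2,0,0,2] ![0,1,1,0,0] ![0,3,1,0,2] m1 m11 (by decide) (by decide) (by decide)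
  have m29 : Complex.I • pauliString (fun k => σm (![2,0,1,0,3] k)) ∈ dla 4 sigmaGraph :=
    stepA ![2,3,0,0,1] ![0,3,1,0,2] ![2,0,1,0,3] m22 m28 (by decide) (by decide) (by decide)
  have m30 : Complex.I • pauliString (fun k => σm (![2,1,2,2,3] k)) ∈ dla 4 sigmaGraph :=
    stepA ![0,1,3,2,0] ![2,0,1,0,3] ![2,1,2,2,3] m16 m29 (by decide) (by decide) (by decide)
  have m31 : Complex.I • pauliString (fun k => σm (![0,0,0,2,2] k)) ∈ dla 4 sigmaGraph :=
    stepB ![2,1,2,0,1] ![2,1,2,2,3] ![0,0,0,2,2] m23 m30 (by decide) (by decide) (by decide)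
  apply LieSubalgebra.lieSpan_le.mpr
  rintro M ⟨i, j, hij, p, hp, rfl⟩
  rcases adj_cases i j hij with h | ⟨rfl, rfl⟩ | ⟨rfl, rfl⟩ | ⟨rfl, rfl⟩ | ⟨rfl, rfl⟩
  · exact LieSubalgebra.subset_lieSpan ⟨i, j, h, p, hp, rfl⟩
  · simp only [genSet, Set.mem_insert_iff, Set.mem_singleton_iff] at hp
    rcases hp with rfl | rfl
    · exact m27
    · exact m21
  · simp only [genSet, Set.mem_insert_iff, Set.mem_singleton_iff] at hp
    rcases hp with rfl | rfl
    · exact m27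
    · exact m21
  · simp only [genSet, Set.mem_insert_iff, Set.mem_singleton_iff] at hp
    rcases hp with rfl | rfl
    · exact m13
    · exact m31
  · simp only [genSet, Set.mem_insert_iff, Set.mem_singleton_iff] at hp
    rcases hp with rfl | rfl
    · exact m13
    · exact m31

lemma key6 : dla 6 K23Graph ≤ dla 6 sigmaGraph := by
  have m0 : Complex.I • pauliString (fun k => σm (![0,1,0,0,1] k)) ∈ dla 6 sigmaGraph :=
    gen_mem 1 4 adjE14 (PauliX, PauliX) (by simp [genSet]) _ rfl
  have m1 : Complex.I • pauliString (fun k => σm (![0,3,2,0,0] k)) ∈ dla 6 sigmaGraph :=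
    gen_mem 1 2 adjE12 (PauliZ, PauliY) (by simp [genSet]) _ rfl
  have m2 : Complex.I • pauliString (fun k => σm (![0,2,2,0,1] k)) ∈ dla 6 sigmaGraph :=
    stepB ![0,1,0,0,1] ![0,3,2,0,0] ![0,2,2,0,1] m0 m1 (by decide) (by decide) (by decide)
  have m3 : Complex.I • pauliString (fun k => σm (![0,0,1,1,0] k)) ∈ dla 6 sigmaGraph :=
    gen_mem 2 3 adjE23 (PauliX, PauliX) (by simp [genSet]) _ rfl
  have m4 : Complex.I • pauliString (fun k => σm (![0,2,3,1,1] k)) ∈ dla 6 sigmaGraph :=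
    stepA ![0,0,1,1,0] ![0,2,2,0,1] ![0,2,3,1,1] m3 m2 (by decide) (by decide) (by decide)
  have m5 : Complex.I • pauliString (fun k => σm (![0,2,0,0,3] k)) ∈ dla 6 sigmaGraph :=
    gen_mem 1 4 adjE14 (PauliY, PauliZ) (by simp [genSet]) _ rfl
  have m6 : Complex.I • pauliString (fun k => σm (![0,0,3,1,2] k)) ∈ dla 6 sigmaGraph :=
    stepA ![0,2,0,0,3] ![0,2,3,1,1] ![0,0,3,1,2] m5 m4 (by decide) (by decide) (by decide)
  have m7 : Complex.I • pauliString (fun k => σm (![0,0,3,2,0] k)) ∈ dla 6 sigmaGraph :=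
    gen_mem 2 3 adjE23 (PauliZ, PauliY) (by simp [genSet]) _ rfl
  have m8 : Complex.I • pauliString (fun k => σm (![0,0,0,3,2] k)) ∈ dla 6 sigmaGraph :=
    stepB ![0,0,3,2,0] ![0,0,3,1,2] ![0,0,0,3,2] m7 m6 (by decide) (by decide) (by decide)
  have m9 : Complex.I • pauliString (fun k => σm (![1,1,0,0,0] k)) ∈ dla 6 sigmaGraph :=
    gen_mem 0 1 adjE01 (PauliX, PauliX) (by simp [genSet]) _ rfl
  have m10 : Complex.I • pauliString (fun k => σm (![1,2,2,0,0] k)) ∈ dla 6 sigmaGraph :=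
    stepB ![1,1,0,0,0] ![0,3,2,0,0] ![1,2,2,0,0] m9 m1 (by decide) (by decide) (by decide)
  have m11 : Complex.I • pauliString (fun k => σm (![1,2,3,1,0] k)) ∈ dla 6 sigmaGraph :=
    stepA ![0,0,1,1,0] ![1,2,2,0,0] ![1,2,3,1,0] m3 m10 (by decide) (by decide) (by decide)
  have m12 : Complex.I • pauliString (fun k => σm (![3,2,0,0,0] k)) ∈ dla 6 sigmaGraph :=
    gen_mem 0 1 adjE01 (PauliZ, PauliY) (by simp [genSet]) _ rfl
  have m13 : Complex.I • pauliString (fun k => σm (![2,0,3,1,0] k)) ∈ dla 6 sigmaGraph :=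
    stepA ![3,2,0,0,0] ![1,2,3,1,0] ![2,0,3,1,0] m12 m11 (by decide) (by decide) (by decide)
  have m14 : Complex.I • pauliString (fun k => σm (![2,0,0,3,0] k)) ∈ dla 6 sigmaGraph :=
    stepB ![0,0,3,2,0] ![2,0,3,1,0] ![2,0,0,3,0] m7 m13 (by decide) (by decide) (by decide)
  have m15 : Complex.I • pauliString (fun k => σm (![0,0,2,3,0] k)) ∈ dla 6 sigmaGraph :=
    gen_mem 2 3 adjE23 (PauliY, PauliZ) (by simp [genSet]) _ rfl
  have m16 : Complex.I • pauliString (fun k => σm (![0,2,3,0,0] k)) ∈ dla 6 sigmaGraph :=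
    gen_mem 1 2 adjE12 (PauliY, PauliZ) (by simp [genSet]) _ rfl
  have m17 : Complex.I • pauliString (fun k => σm (![0,2,1,3,0] k)) ∈ dla 6 sigmaGraph :=
    stepA ![0,0,2,3,0] ![0,2,3,0,0] ![0,2,1,3,0] m15 m16 (by decide) (by decide) (by decide)
  have m18 : Complex.I • pauliString (fun k => σm (![0,3,1,3,1] k)) ∈ dla 6 sigmaGraph :=
    stepA ![0,1,0,0,1] ![0,2,1,3,0] ![0,3,1,3,1] m0 m17 (by decide) (by decide) (by decide)
  have m19 : Complex.I • pauliString (fun k => σm (![0,0,3,3,1] k)) ∈ dla 6 sigmaGraph :=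
    stepB ![0,3,2,0,0] ![0,3,1,3,1] ![0,0,3,3,1] m1 m18 (by decide) (by decide) (by decide)
  have m20 : Complex.I • pauliString (fun k => σm (![0,0,0,1,1] k)) ∈ dla 6 sigmaGraph :=
    stepA ![0,0,3,2,0] ![0,0,3,3,1] ![0,0,0,1,1] m7 m19 (by decide) (by decide) (by decide)
  have m21 : Complex.I • pauliString (fun k => σm (![1,3,1,3,0] k)) ∈ dla 6 sigmaGraph :=
    stepA ![1,1,0,0,0] ![0,2,1,3,0] ![1,3,1,3,0] m9 m17 (by decide) (by decide) (by decide)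
  have m22 : Complex.I • pauliString (fun k => σm (![1,3,0,2,0] k)) ∈ dla 6 sigmaGraph :=
    stepB ![0,0,1,1,0] ![1,3,1,3,0] ![1,3,0,2,0] m3 m21 (by decide) (by decide) (by decide)
  have m23 : Complex.I • pauliString (fun k => σm (![2,3,0,0,0] k)) ∈ dla 6 sigmaGraph :=
    gen_mem 0 1 adjE01 (PauliY, PauliZ) (by simp [genSet]) _ rfl
  have m24 : Complex.I • pauliString (fun k => σm (![3,0,0,2,0] k)) ∈ dla 6 sigmaGraph :=
    stepB ![2,3,0,0,0] ![1,3,0,2,0] ![3,0,0,2,0] m23 m22 (by decide) (by decide) (by decide)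
  have m25 : Complex.I • pauliString (fun k => σm (![0,1,1,0,0] k)) ∈ dla 6 sigmaGraph :=
    gen_mem 1 2 adjE12 (PauliX, PauliX) (by simp [genSet]) _ rfl
  have m26 : Complex.I • pauliString (fun k => σm (![0,1,3,3,0] k)) ∈ dla 6 sigmaGraph :=
    stepB ![0,0,2,3,0] ![0,1,1,0,0] ![0,1,3,3,0] m15 m25 (by decide) (by decide) (by decide)
  have m27 : Complex.I • pauliString (fun k => σm (![2,2,3,3,0] k)) ∈ dla 6 sigmaGraph :=
    stepA ![2,3,0,0,0] ![0,1,3,3,0] ![2,2,3,3,0] m23 m26 (by decide) (by decide) (by decide)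
  have m28 : Complex.I • pauliString (fun k => σm (![1,0,3,3,0] k)) ∈ dla 6 sigmaGraph :=
    stepB ![3,2,0,0,0] ![2,2,3,3,0] ![1,0,3,3,0] m12 m27 (by decide) (by decide) (by decide)
  have m29 : Complex.I • pauliString (fun k => σm (![1,0,0,1,0] k)) ∈ dla 6 sigmaGraph :=
    stepA ![0,0,3,2,0] ![1,0,3,3,0] ![1,0,0,1,0] m7 m28 (by decide) (by decide) (by decide)
  have m30 : Complex.I • pauliString (fun k => σm (![0,3,0,2,1] k)) ∈ dla 6 sigmaGraph :=
    stepB ![0,0,1,1,0] ![0,3,1,3,1] ![0,3,0,2,1] m3 m18 (by decide) (by decide) (by decide)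
  have m31 : Complex.I • pauliString (fun k => σm (![0,3,0,0,2] k)) ∈ dla 6 sigmaGraph :=
    gen_mem 1 4 adjE14 (PauliZ, PauliY) (by simp [genSet]) _ rfl
  have m32 : Complex.I • pauliString (fun k => σm (![0,0,0,2,3] k)) ∈ dla 6 sigmaGraph :=
    stepB ![0,3,0,0,2] ![0,3,0,2,1] ![0,0,0,2,3] m31 m30 (by decide) (by decide) (by decide)
  apply LieSubalgebra.lieSpan_le.mpr
  rintro M ⟨i, j, hij, p, hp, rfl⟩
  rcases adj_cases i j hij with h | ⟨rfl, rfl⟩ | ⟨rfl, rfl⟩ | ⟨rfl, rfl⟩ | ⟨rfl, rfl⟩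
  · exact LieSubalgebra.subset_lieSpan ⟨i, j, h, p, hp, rfl⟩
  · simp only [genSet, Set.mem_insert_iff, Set.mem_singleton_iff] at hp
    rcases hp with rfl | rfl | rfl
    · exact m29
    · exact m14
    · exact m24
  · simp only [genSet, Set.mem_insert_iff, Set.mem_singleton_iff] at hp
    rcases hp with rfl | rfl | rfl
    · exact m29
    · exact m24
    · exact m14
  · simp only [genSet, Set.mem_insert_iff, Set.mem_singleton_iff] at hp
    rcases hp with rfl | rfl | rfl
    · exact m20
    · exact m32
    · exact m8
  · simp only [genSet, Set.mem_insert_iff, Set.mem_singleton_iff] at hp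
    rcases hp with rfl | rfl | rfl
    · exact m20
    · exact m8
    · exact m32

lemma key14 : dla 14 K23Graph ≤ dla 14 sigmaGraph := by
  have m0 : Complex.I • pauliString (fun k => σm (![1,1,0,0,0] k)) ∈ dla 14 sigmaGraph :=
    gen_mem 0 1 adjE01 (PauliX, PauliX) (by simp [genSet]) _ rfl
  have m1 : Complex.I • pauliString (fun k => σm (![0,2,0,0,1] k)) ∈ dla 14 sigmaGraph :=
    gen_mem 1 4 adjE14 (PauliY, PauliX) (by simp [genSet]) _ rfl
  have m2 : Complex.I • pauliString (fun k => σm (![1,3,0,0,1] k)) ∈ dla 14 sigmaGraph :=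
    stepA ![1,1,0,0,0] ![0,2,0,0,1] ![1,3,0,0,1] m0 m1 (by decide) (by decide) (by decide)
  have m3 : Complex.I • pauliString (fun k => σm (![0,2,1,0,0] k)) ∈ dla 14 sigmaGraph :=
    gen_mem 1 2 adjE12 (PauliY, PauliX) (by simp [genSet]) _ rfl
  have m4 : Complex.I • pauliString (fun k => σm (![1,3,1,0,0] k)) ∈ dla 14 sigmaGraph :=
    stepA ![1,1,0,0,0] ![0,2,1,0,0] ![1,3,1,0,0] m0 m3 (by decide) (by decide) (by decide)
  have m5 : Complex.I • pauliString (fun k => σm (![1,1,1,0,1] k)) ∈ dla 14 sigmaGraph :=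
    stepA ![0,2,0,0,1] ![1,3,1,0,0] ![1,1,1,0,1] m1 m4 (by decide) (by decide) (by decide)
  have m6 : Complex.I • pauliString (fun k => σm (![0,1,2,0,0] k)) ∈ dla 14 sigmaGraph :=
    gen_mem 1 2 adjE12 (PauliX, PauliY) (by simp [genSet]) _ rfl
  have m7 : Complex.I • pauliString (fun k => σm (![1,0,3,0,1] k)) ∈ dla 14 sigmaGraph :=
    stepB ![0,1,2,0,0] ![1,1,1,0,1] ![1,0,3,0,1] m6 m5 (by decide) (by decide) (by decide)
  have m8 : Complex.I • pauliString (fun k => σm (![0,0,2,1,0] k)) ∈ dla 14 sigmaGraph :=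
    gen_mem 2 3 adjE23 (PauliY, PauliX) (by simp [genSet]) _ rfl
  have m9 : Complex.I • pauliString (fun k => σm (![1,0,1,1,1] k)) ∈ dla 14 sigmaGraph :=
    stepA ![0,0,2,1,0] ![1,0,3,0,1] ![1,0,1,1,1] m8 m7 (by decide) (by decide) (by decide)
  have m10 : Complex.I • pauliString (fun k => σm (![0,2,0,0,2] k)) ∈ dla 14 sigmaGraph :=
    gen_mem 1 4 adjE14 (PauliY, PauliY) (by simp [genSet]) _ rfl
  have m11 : Complex.I • pauliString (fun k => σm (![1,2,1,1,3] k)) ∈ dla 14 sigmaGraph :=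
    stepB ![0,2,0,0,2] ![1,0,1,1,1] ![1,2,1,1,3] m10 m9 (by decide) (by decide) (by decide)
  have m12 : Complex.I • pauliString (fun k => σm (![0,1,1,0,0] k)) ∈ dla 14 sigmaGraph :=
    gen_mem 1 2 adjE12 (PauliX, PauliX) (by simp [genSet]) _ rfl
  have m13 : Complex.I • pauliString (fun k => σm (![1,3,0,1,3] k)) ∈ dla 14 sigmaGraph :=
    stepA ![0,1,1,0,0] ![1,2,1,1,3] ![1,3,0,1,3] m12 m11 (by decide) (by decide) (by decide)
  have m14 : Complex.I • pauliString (fun k => σm (![0,0,0,1,2] k)) ∈ dla 14 sigmaGraph :=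
    stepB ![1,3,0,0,1] ![1,3,0,1,3] ![0,0,0,1,2] m2 m13 (by decide) (by decide) (by decide)
  have m15 : Complex.I • pauliString (fun k => σm (![0,2,2,0,0] k)) ∈ dla 14 sigmaGraph :=
    gen_mem 1 2 adjE12 (PauliY, PauliY) (by simp [genSet]) _ rfl
  have m16 : Complex.I • pauliString (fun k => σm (![1,3,2,0,0] k)) ∈ dla 14 sigmaGraph :=
    stepA ![1,1,0,0,0] ![0,2,2,0,0] ![1,3,2,0,0] m0 m15 (by decide) (by decide) (by decide)
  have m17 : Complex.I • pauliString (fun k => σm (![0,0,1,2,0] k)) ∈ dla 14 sigmaGraph :=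
    gen_mem 2 3 adjE23 (PauliX, PauliY) (by simp [genSet]) _ rfl
  have m18 : Complex.I • pauliString (fun k => σm (![1,3,3,2,0] k)) ∈ dla 14 sigmaGraph :=
    stepA ![0,0,1,2,0] ![1,3,2,0,0] ![1,3,3,2,0] m17 m16 (by decide) (by decide) (by decide)
  have m19 : Complex.I • pauliString (fun k => σm (![1,1,3,2,1] k)) ∈ dla 14 sigmaGraph :=
    stepA ![0,2,0,0,1] ![1,3,3,2,0] ![1,1,3,2,1] m1 m18 (by decide) (by decide) (by decide)
  have m20 : Complex.I • pauliString (fun k => σm (![1,0,1,2,1] k)) ∈ dla 14 sigmaGraph :=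
    stepA ![0,1,2,0,0] ![1,1,3,2,1] ![1,0,1,2,1] m6 m19 (by decide) (by decide) (by decide)
  have m21 : Complex.I • pauliString (fun k => σm (![1,2,1,2,3] k)) ∈ dla 14 sigmaGraph :=
    stepB ![0,2,0,0,2] ![1,0,1,2,1] ![1,2,1,2,3] m10 m20 (by decide) (by decide) (by decide)
  have m22 : Complex.I • pauliString (fun k => σm (![1,3,0,2,3] k)) ∈ dla 14 sigmaGraph :=
    stepA ![0,1,1,0,0] ![1,2,1,2,3] ![1,3,0,2,3] m12 m21 (by decide) (by decide) (by decide)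
  have m23 : Complex.I • pauliString (fun k => σm (![0,0,0,2,2] k)) ∈ dla 14 sigmaGraph :=
    stepB ![1,3,0,0,1] ![1,3,0,2,3] ![0,0,0,2,2] m2 m22 (by decide) (by decide) (by decide)
  have m24 : Complex.I • pauliString (fun k => σm (![0,1,0,0,1] k)) ∈ dla 14 sigmaGraph :=
    gen_mem 1 4 adjE14 (PauliX, PauliX) (by simp [genSet]) _ rfl
  have m25 : Complex.I • pauliString (fun k => σm (![1,2,3,2,1] k)) ∈ dla 14 sigmaGraph :=
    stepB ![0,1,0,0,1] ![1,3,3,2,0] ![1,2,3,2,1] m24 m18 (by decide) (by decide) (by decide)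
  have m26 : Complex.I • pauliString (fun k => σm (![1,0,2,2,1] k)) ∈ dla 14 sigmaGraph :=
    stepB ![0,2,1,0,0] ![1,2,3,2,1] ![1,0,2,2,1] m3 m25 (by decide) (by decide) (by decide)
  have m27 : Complex.I • pauliString (fun k => σm (![2,1,0,0,0] k)) ∈ dla 14 sigmaGraph :=
    gen_mem 0 1 adjE01 (PauliY, PauliX) (by simp [genSet]) _ rfl
  have m28 : Complex.I • pauliString (fun k => σm (![3,1,2,2,1] k)) ∈ dla 14 sigmaGraph :=
    stepB ![2,1,0,0,0] ![1,0,2,2,1] ![3,1,2,2,1] m27 m26 (by decide) (by decide) (by decide)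
  have m29 : Complex.I • pauliString (fun k => σm (![3,3,0,2,1] k)) ∈ dla 14 sigmaGraph :=
    stepB ![0,2,2,0,0] ![3,1,2,2,1] ![3,3,0,2,1] m15 m28 (by decide) (by decide) (by decide)
  have m30 : Complex.I • pauliString (fun k => σm (![2,0,0,2,0] k)) ∈ dla 14 sigmaGraph :=
    stepB ![1,3,0,0,1] ![3,3,0,2,1] ![2,0,0,2,0] m2 m29 (by decide) (by decide) (by decide)
  have m31 : Complex.I • pauliString (fun k => σm (![1,3,0,0,2] k)) ∈ dla 14 sigmaGraph :=
    stepA ![1,1,0,0,0] ![0,2,0,0,2] ![1,3,0,0,2] m0 m10 (by decide) (by decide) (by decide)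
  have m32 : Complex.I • pauliString (fun k => σm (![0,0,0,1,1] k)) ∈ dla 14 sigmaGraph :=
    stepA ![1,3,0,0,2] ![1,3,0,1,3] ![0,0,0,1,1] m31 m13 (by decide) (by decide) (by decide)
  have m33 : Complex.I • pauliString (fun k => σm (![0,0,0,2,1] k)) ∈ dla 14 sigmaGraph :=
    stepA ![1,3,0,0,2] ![1,3,0,2,3] ![0,0,0,2,1] m31 m22 (by decide) (by decide) (by decide)
  have m34 : Complex.I • pauliString (fun k => σm (![1,2,1,0,1] k)) ∈ dla 14 sigmaGraph :=
    stepB ![0,1,0,0,1] ![1,3,1,0,0] ![1,2,1,0,1] m24 m4 (by decide) (by decide) (by decide)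
  have m35 : Complex.I • pauliString (fun k => σm (![1,2,3,1,1] k)) ∈ dla 14 sigmaGraph :=
    stepB ![0,0,2,1,0] ![1,2,1,0,1] ![1,2,3,1,1] m8 m34 (by decide) (by decide) (by decide)
  have m36 : Complex.I • pauliString (fun k => σm (![1,0,2,1,1] k)) ∈ dla 14 sigmaGraph :=
    stepB ![0,2,1,0,0] ![1,2,3,1,1] ![1,0,2,1,1] m3 m35 (by decide) (by decide) (by decide)
  have m37 : Complex.I • pauliString (fun k => σm (![3,1,2,1,1] k)) ∈ dla 14 sigmaGraph :=
    stepB ![2,1,0,0,0] ![1,0,2,1,1] ![3,1,2,1,1] m27 m36 (by decide) (by decide) (by decide)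
  have m38 : Complex.I • pauliString (fun k => σm (![3,3,0,1,1] k)) ∈ dla 14 sigmaGraph :=
    stepB ![0,2,2,0,0] ![3,1,2,1,1] ![3,3,0,1,1] m15 m37 (by decide) (by decide) (by decide)
  have m39 : Complex.I • pauliString (fun k => σm (![2,0,0,1,0] k)) ∈ dla 14 sigmaGraph :=
    stepB ![1,3,0,0,1] ![3,3,0,1,1] ![2,0,0,1,0] m2 m38 (by decide) (by decide) (by decide)
  have m40 : Complex.I • pauliString (fun k => σm (![1,2,2,0,2] k)) ∈ dla 14 sigmaGraph :=
    stepB ![0,1,2,0,0] ![1,3,0,0,2] ![1,2,2,0,2] m6 m31 (by decide) (by decide) (by decide)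
  have m41 : Complex.I • pauliString (fun k => σm (![1,0,3,0,2] k)) ∈ dla 14 sigmaGraph :=
    stepA ![0,2,1,0,0] ![1,2,2,0,2] ![1,0,3,0,2] m3 m40 (by decide) (by decide) (by decide)
  have m42 : Complex.I • pauliString (fun k => σm (![0,0,1,1,0] k)) ∈ dla 14 sigmaGraph :=
    gen_mem 2 3 adjE23 (PauliX, PauliX) (by simp [genSet]) _ rfl
  have m43 : Complex.I • pauliString (fun k => σm (![1,0,2,1,2] k)) ∈ dla 14 sigmaGraph :=
    stepB ![0,0,1,1,0] ![1,0,3,0,2] ![1,0,2,1,2] m42 m41 (by decide) (by decide) (by decide)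
  have m44 : Complex.I • pauliString (fun k => σm (![3,1,2,1,2] k)) ∈ dla 14 sigmaGraph :=
    stepB ![2,1,0,0,0] ![1,0,2,1,2] ![3,1,2,1,2] m27 m43 (by decide) (by decide) (by decide)
  have m45 : Complex.I • pauliString (fun k => σm (![3,3,0,1,2] k)) ∈ dla 14 sigmaGraph :=
    stepB ![0,2,2,0,0] ![3,1,2,1,2] ![3,3,0,1,2] m15 m44 (by decide) (by decide) (by decide)
  have m46 : Complex.I • pauliString (fun k => σm (![0,1,0,0,2] k)) ∈ dla 14 sigmaGraph :=
    gen_mem 1 4 adjE14 (PauliX, PauliY) (by simp [genSet]) _ rfl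
  have m47 : Complex.I • pauliString (fun k => σm (![3,2,0,1,0] k)) ∈ dla 14 sigmaGraph :=
    stepB ![0,1,0,0,2] ![3,3,0,1,2] ![3,2,0,1,0] m46 m45 (by decide) (by decide) (by decide)
  have m48 : Complex.I • pauliString (fun k => σm (![2,2,0,0,0] k)) ∈ dla 14 sigmaGraph :=
    gen_mem 0 1 adjE01 (PauliY, PauliY) (by simp [genSet]) _ rfl
  have m49 : Complex.I • pauliString (fun k => σm (![1,0,0,1,0] k)) ∈ dla 14 sigmaGraph :=
    stepA ![2,2,0,0,0] ![3,2,0,1,0] ![1,0,0,1,0] m48 m47 (by decide) (by decide) (by decide)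
  have m50 : Complex.I • pauliString (fun k => σm (![0,0,2,2,0] k)) ∈ dla 14 sigmaGraph :=
    gen_mem 2 3 adjE23 (PauliY, PauliY) (by simp [genSet]) _ rfl
  have m51 : Complex.I • pauliString (fun k => σm (![1,0,1,2,2] k)) ∈ dla 14 sigmaGraph :=
    stepA ![0,0,2,2,0] ![1,0,3,0,2] ![1,0,1,2,2] m50 m41 (by decide) (by decide) (by decide)
  have m52 : Complex.I • pauliString (fun k => σm (![3,1,1,2,2] k)) ∈ dla 14 sigmaGraph :=
    stepB ![2,1,0,0,0] ![1,0,1,2,2] ![3,1,1,2,2] m27 m51 (by decide) (by decide) (by decide)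
  have m53 : Complex.I • pauliString (fun k => σm (![3,3,1,2,0] k)) ∈ dla 14 sigmaGraph :=
    stepB ![0,2,0,0,2] ![3,1,1,2,2] ![3,3,1,2,0] m10 m52 (by decide) (by decide) (by decide)
  have m54 : Complex.I • pauliString (fun k => σm (![3,2,0,2,0] k)) ∈ dla 14 sigmaGraph :=
    stepB ![0,1,1,0,0] ![3,3,1,2,0] ![3,2,0,2,0] m12 m53 (by decide) (by decide) (by decide)
  have m55 : Complex.I • pauliString (fun k => σm (![1,0,0,2,0] k)) ∈ dla 14 sigmaGraph :=
    stepA ![2,2,0,0,0] ![3,2,0,2,0] ![1,0,0,2,0] m48 m54 (by decide) (by decide) (by decide)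
  apply LieSubalgebra.lieSpan_le.mpr
  rintro M ⟨i, j, hij, p, hp, rfl⟩
  rcases adj_cases i j hij with h | ⟨rfl, rfl⟩ | ⟨rfl, rfl⟩ | ⟨rfl, rfl⟩ | ⟨rfl, rfl⟩
  · exact LieSubalgebra.subset_lieSpan ⟨i, j, h, p, hp, rfl⟩
  · simp only [genSet, Set.mem_insert_iff, Set.mem_singleton_iff] at hp
    rcases hp with rfl | rfl | rfl | rfl
    · exact m49
    · exact m30
    · exact m55
    · exact m39
  · simp only [genSet, Set.mem_insert_iff, Set.mem_singleton_iff] at hp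
    rcases hp with rfl | rfl | rfl | rfl
    · exact m49
    · exact m30
    · exact m39
    · exact m55
  · simp only [genSet, Set.mem_insert_iff, Set.mem_singleton_iff] at hp
    rcases hp with rfl | rfl | rfl | rfl
    · exact m32
    · exact m23
    · exact m14
    · exact m33
  · simp only [genSet, Set.mem_insert_iff, Set.mem_singleton_iff] at hp
    rcases hp with rfl | rfl | rfl | rfl
    · exact m32
    · exact m23
    · exact m33
    · exact m14

lemma dla_mono (K : ℕ) : dla K sigmaGraph ≤ dla K K23Graph := by
  apply LieSubalgebra.lieSpan_le.mpr
  rintro M ⟨i, j, hij, p, hp, rfl⟩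
  exact LieSubalgebra.subset_lieSpan ⟨i, j, adj_mono i j hij, p, hp, rfl⟩

/-- For every `k ∈ {2, 4, 6, 14}`, the graph `Σ` is `k`-equivalent to the
complete bipartite graph `K_{2,3}`. -/
theorem dla_sigmaGraph_eq_K23 (k : ℕ) (hk : k ∈ ({2, 4, 6, 14} : Set ℕ)) :
    dla k sigmaGraph = dla k K23Graph := by
  simp only [Set.mem_insert_iff, Set.mem_singleton_iff] at hk
  rcases hk with rfl | rfl | rfl | rfl
  · exact le_antisymm (dla_mono 2) key2
  · exact le_antisymm (dla_mono 4) key4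
  · exact le_antisymm (dla_mono 6) key6
  · exact le_antisymm (dla_mono 14) key14
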